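/- Let b ≥ 2 be an integer and d ≥ 1. For all k_1,…,k_d ∈ ℕ₀ and all x_1,…,x_d ∈ [0,1), wal_{𝒟_d(k_1,…,k_d)}(𝒟_d(x_1,…,x_d)) = ∏_{i=1}^d wal_{k_i}(x_i). -/

import Mathlib

open MeasureTheory Set

noncomputable section

namespace Paper

/-- The `i`-th base-`b` digit of `x ∈ [0,1)` (for `i ≥ 1`), using the expansion in which
infinitely many digits differ from `b-1` (i.e. the floor-based expansion). -/
def bdigit (b : ℕ) (x : ℝ) (i : ℕ) : ℕ := (⌊x * (b : ℝ) ^ i⌋).toNat % b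

/-- A `b`-adic rational in `[0,1)`: a number with a finite base-`b` expansion. -/
def IsBadicRational (b : ℕ) (x : ℝ) : Prop := ∃ (n k : ℕ), x = (n : ℝ) / (b : ℝ) ^ k

/-- The `k`-th Walsh function in base `b`. -/
def wal (b k : ℕ) (x : ℝ) : ℂ :=
  Complex.exp (2 * Real.pi * Complex.I / b) ^
    (∑ j ∈ Finset.range k, bdigit b x (j + 1) * (k / b ^ j % b))

/-- The multidimensional Walsh function. -/
def walV (b s : ℕ) (k : Fin s → ℕ) (x : Fin s → ℝ) : ℂ := ∏ j, wal b (k j) (x j)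

/-- Digitwise addition modulo `b` of nonnegative integers. -/
def baddN (b k l : ℕ) : ℕ :=
  ∑ j ∈ Finset.range (k + l), ((k / b ^ j % b + l / b ^ j % b) % b) * b ^ j

/-- Digitwise addition modulo `b` on `[0,1)`. -/
def baddR (b : ℕ) (x y : ℝ) : ℝ :=
  ∑' i : ℕ, (((bdigit b x (i + 1) + bdigit b y (i + 1)) % b : ℕ) : ℝ) / (b : ℝ) ^ (i + 1)

/-- Digitwise subtraction modulo `b` on `[0,1)`. -/
def bsubR (b : ℕ) (x y : ℝ) : ℝ :=
  ∑' i : ℕ, (((bdigit b x (i + 1) + (b - bdigit b y (i + 1))) % b : ℕ) : ℝ) / (b : ℝ) ^ (i + 1)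

/-- The unit box `[0,1)^s`. -/
def unitBox (s : ℕ) : Set (Fin s → ℝ) := Set.univ.pi fun _ => Set.Ico (0 : ℝ) 1

/-- The closed unit cube `[0,1]^s`. -/
def unitCube (s : ℕ) : Set (Fin s → ℝ) := Set.univ.pi fun _ => Set.Icc (0 : ℝ) 1

/-- The digit interlacing function `𝒟_d : [0,1)^d → [0,1)`. -/
def interlaceR (b d : ℕ) (x : Fin d → ℝ) : ℝ :=
  ∑' a : ℕ, ∑ r : Fin d, (bdigit b (x r) (a + 1) : ℝ) / (b : ℝ) ^ ((r : ℕ) + 1 + a * d)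

/-- The digit interlacing function on nonnegative integers. -/
def interlaceN (b d : ℕ) (k : Fin d → ℕ) : ℕ :=
  ∑ r : Fin d, ∑ a ∈ Finset.range (k r), (k r / b ^ a % b) * b ^ ((r : ℕ) + a * d)

/-- The index of position `r` of block `i` inside `Fin (d*s)`. -/
def embIdx (d s : ℕ) (i : Fin s) (r : Fin d) : Fin (d * s) :=
  ⟨(i : ℕ) * d + (r : ℕ), by
    calc (i : ℕ) * d + (r : ℕ) < (i : ℕ) * d + d := by have := r.2; omega
      _ = ((i : ℕ) + 1) * d := (Nat.succ_mul _ _).symm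
      _ ≤ s * d := Nat.mul_le_mul_right d i.2
      _ = d * s := Nat.mul_comm s d⟩

/-- Blockwise digit interlacing `𝒟_d : [0,1)^{ds} → [0,1)^s`. -/
def interlaceB (b d s : ℕ) (x : Fin (d * s) → ℝ) : Fin s → ℝ :=
  fun i => interlaceR b d fun r => x (embIdx d s i r)

/-- Blockwise digit interlacing on integer vectors, `ℕ₀^{ds} → ℕ₀^s`. -/
def interlaceBN (b d s : ℕ) (k : Fin (d * s) → ℕ) : Fin s → ℕ :=
  fun i => interlaceN b d fun r => k (embIdx d s i r)

/-- `P` is a `(t,m,s)`-net in base `b`. -/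
def IsNet (b m s t : ℕ) (P : Fin (b ^ m) → Fin s → ℝ) : Prop :=
  ∀ dv : Fin s → ℕ, ∑ i, dv i ≤ m - t →
    ∀ av : Fin s → ℕ, (∀ i, av i < b ^ dv i) →
      (Finset.univ.filter fun n =>
        ∀ i, P n i ∈ Set.Ico ((av i : ℝ) / (b : ℝ) ^ dv i) (((av i : ℝ) + 1) / (b : ℝ) ^ dv i)).card
        = b ^ (m - ∑ i, dv i)

/-- `P` is a digital net over `ℤ_b` generated by `m × m` matrices `C_1, …, C_s`. -/
def IsDigitalNet (b m s : ℕ) (P : Fin (b ^ m) → Fin s → ℝ) : Prop :=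
  ∃ C : Fin s → Matrix (Fin m) (Fin m) (ZMod b),
    ∀ n : Fin (b ^ m), ∀ i : Fin s,
      P n i = ∑ j : Fin m,
        (((C i).mulVec fun r : Fin m => (((n : ℕ) / b ^ (r : ℕ) % b : ℕ) : ZMod b)) j).val
          / (b : ℝ) ^ ((j : ℕ) + 1)

/-- One-dimensional finite difference `Δ_α(x; z_1,…,z_α) f`. -/
def fdiff (f : ℝ → ℝ) (α : ℕ) (x : ℝ) (z : Fin α → ℝ) : ℝ :=
  ∑ v : Finset (Fin α), (-1 : ℝ) ^ v.card * f (x + ∑ i ∈ v, z i)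

/-- Multidimensional finite difference `Δ_𝛂(x; z_1,…,z_s) f`. -/
def fdiffV (s : ℕ) (f : (Fin s → ℝ) → ℝ) (αv : Fin s → ℕ) (x : Fin s → ℝ)
    (z : (i : Fin s) → Fin (αv i) → ℝ) : ℝ :=
  ∑ v : (i : Fin s) → Finset (Fin (αv i)),
    (-1 : ℝ) ^ (∑ i, (v i).card) * f fun i => x i + ∑ r ∈ v i, z i r

/-- Apply a permutation of `{0,…,b-1}` to a natural number `< b`. -/
def applyPerm (b : ℕ) (π : Equiv.Perm (Fin b)) (n : ℕ) : ℕ :=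
  if h : n < b then (π ⟨n, h⟩ : Fin b) else n

/-- The list of the first `k` base-`b` digits of `x`. -/
def digitList (b : ℕ) (x : ℝ) (k : ℕ) : List ℕ :=
  (List.range k).map fun j => bdigit b x (j + 1)

/-- Owen's scrambling of `x ∈ [0,1)` by the family `F` of permutations (indexed by
digit prefixes): the `k`-th digit `ξ_k` is replaced by `π_{ξ_1,…,ξ_{k-1}}(ξ_k)`. -/
def scrambleR (b : ℕ) (F : List ℕ → Equiv.Perm (Fin b)) (x : ℝ) : ℝ :=
  ∑' k : ℕ, (applyPerm b (F (digitList b x k)) (bdigit b x (k + 1)) : ℝ) / (b : ℝ) ^ (k + 1)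

/-- `sc` is a random Owen scrambling: a random family of permutations of `{0,…,b-1}`,
one for each of the `D` coordinates and each digit prefix, all chosen independently
and uniformly at random. -/
def IsUniformScrambling {Ω : Type*} [MeasurableSpace Ω] (μ : Measure Ω) (b D : ℕ)
    (sc : Ω → Fin D → List ℕ → Equiv.Perm (Fin b)) : Prop :=
  letI : MeasurableSpace (Equiv.Perm (Fin b)) := ⊤
  (∀ i l, Measurable fun ω => sc ω i l) ∧
    ProbabilityTheory.iIndepFun (m := fun _ : Fin D × List ℕ => (⊤ : MeasurableSpace (Equiv.Perm (Fin b))))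
      (fun p : Fin D × List ℕ => fun ω => sc ω p.1 p.2) μ ∧
    ∀ i l π, μ {ω | sc ω i l = π} = ((b.factorial : ENNReal))⁻¹

/-- `k` belongs to the digit box determined by `l`: `⌊b^{l-1}⌋ ≤ k < b^l`. -/
def inBl (b l k : ℕ) : Prop := b ^ l / b ≤ k ∧ k < b ^ l

/-- `k_r`: the part of `k` supported on base-`b` digits at positions `≡ r (mod d)`. -/
def kpart (b d k r : ℕ) : ℕ :=
  ∑ j ∈ Finset.range k, if j % d = r then (k / b ^ j % b) * b ^ j else 0

/-- The digits of `x` and `x'` in the arithmetic progression of positions `r, r+d, r+2d, …`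
(0-indexed; digit position `r + j·d` is the `(r+1+j·d)`-th digit) agree for `j' < j` and
differ at `j`; i.e. `β_r + 1 = j`. -/
def firstDiffAt (b d : ℕ) (x x' : ℝ) (r j : ℕ) : Prop :=
  (∀ j' < j, bdigit b x (r + 1 + j' * d) = bdigit b x' (r + 1 + j' * d)) ∧
    bdigit b x (r + 1 + j * d) ≠ bdigit b x' (r + 1 + j * d)

/-- The Walsh coefficient `f̂(k)` of `f : [0,1]^s → ℝ`. -/
def fhat (b s : ℕ) (f : (Fin s → ℝ) → ℝ) (k : Fin s → ℕ) : ℂ :=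
  ∫ x in unitBox s, (f x : ℂ) * (starRingEnd ℂ) (walV b s k x)

/-- `σ²_{d,ℓ,s}(f) = Σ_{k ∈ B_{d,ℓ,s}} |f̂(𝒟_d(k))|²`. -/
def sigmaSq (b d s : ℕ) (ℓ : Fin (d * s) → ℕ) (f : (Fin s → ℝ) → ℝ) : ℝ :=
  ∑ k ∈ Fintype.piFinset (fun j => Finset.Ico (b ^ ℓ j / b) (b ^ ℓ j)),
    ‖fhat b s f (interlaceBN b d s k)‖ ^ 2

/-- The gain coefficient `Γ_{d,ℓ}(P)` of order `d`, computed with a representative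
`k ∈ B_{d,ℓ,s}`, for a scrambling family `sc` and a left inverse `Dinv1` of `𝒟_d`. -/
def gainCoef {Ω : Type*} [MeasurableSpace Ω] (μ : Measure Ω) (b d s m : ℕ)
    (sc : Ω → Fin (d * s) → List ℕ → Equiv.Perm (Fin b))
    (Dinv1 : ℝ → Fin d → ℝ) (P : Fin (b ^ m) → Fin s → ℝ) (k : Fin (d * s) → ℕ) : ℂ :=
  (b : ℂ) ^ (-(2 * m : ℤ)) * ∑ n : Fin (b ^ m), ∑ n' : Fin (b ^ m), ∏ i : Fin s,
    ∫ ω, (∏ r : Fin d, wal b (k (embIdx d s i r))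
            (scrambleR b (sc ω (embIdx d s i r)) (Dinv1 (P n i) r))) *
      (starRingEnd ℂ) (∏ r : Fin d, wal b (k (embIdx d s i r))
            (scrambleR b (sc ω (embIdx d s i r)) (Dinv1 (P n' i) r))) ∂μ

/-- The `b`-adic box `∏_i [a_i b^{-l_i}, (a_i+1) b^{-l_i})`. -/
def badicBox (b n : ℕ) (l a : Fin n → ℕ) : Set (Fin n → ℝ) :=
  Set.univ.pi fun i => Set.Ico ((a i : ℝ) / (b : ℝ) ^ l i) (((a i : ℝ) + 1) / (b : ℝ) ^ l i)

/-- A partition of `[0,1)^n` into `b`-adic boxes (each encoded by its pair `(l, a)`). -/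
def IsBadicPartition (b n : ℕ) (Part : Finset ((Fin n → ℕ) × (Fin n → ℕ))) : Prop :=
  (∀ p ∈ Part, ∀ i, 1 ≤ p.1 i ∧ p.2 i < b ^ p.1 i) ∧
    (∀ p ∈ Part, ∀ q ∈ Part, p ≠ q → Disjoint (badicBox b n p.1 p.2) (badicBox b n q.1 q.2)) ∧
    (⋃ p ∈ Part, badicBox b n p.1 p.2) = unitBox n

/-- The increment `z_{i,r} = τ b^{-α(l_i - 1) - r}` (with `r` one-indexed). -/
def zval (b α s : ℕ) (l : Fin (α * s) → ℕ) (τ : ℤ) (i r : ℕ) : ℝ :=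
  (τ : ℝ) * (b : ℝ) ^ (-(α : ℤ) * ((if h : i < α * s then (l ⟨i, h⟩ : ℤ) else 0) - 1) - ((r : ℤ) + 1))

/-- The inner supremum in the definition of the generalized Vitali variation. -/
def vitaliInner (b α s : ℕ) (αv : Fin s → ℕ) (f : (Fin s → ℝ) → ℝ)
    (l a : Fin (α * s) → ℕ) : ENNReal :=
  ⨆ (t : Fin s → ℝ) (τ : (i : Fin s) → Fin (αv i) → ℤ)
    (_ : t ∈ interlaceB b α s '' badicBox b (α * s) l a)
    (_ : ∀ i r, τ i r ≠ 0 ∧ 1 - (b : ℤ) ≤ τ i r ∧ τ i r ≤ (b : ℤ) - 1)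
    (_ : ∀ v : (i : Fin s) → Finset (Fin (αv i)),
      (fun i => t i + ∑ r ∈ v i, zval b α s l (τ i r) (i : ℕ) (r : ℕ)) ∈
        interlaceB b α s '' badicBox b (α * s) (fun i => l i - 1) (fun i => a i / b)),
    ENNReal.ofReal
      ((fdiffV s f αv t (fun i r => zval b α s l (τ i r) (i : ℕ) (r : ℕ)) /
        ∏ i, ∏ r : Fin (αv i), zval b α s l (τ i r) (i : ℕ) (r : ℕ)) ^ 2)

/-- The generalized Vitali variation `V^{(s)}_𝛂(f)`. -/
def vitaliVar (b α s : ℕ) (αv : Fin s → ℕ) (f : (Fin s → ℝ) → ℝ) : ENNReal :=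
  ⨆ (Part : Finset ((Fin (α * s) → ℕ) × (Fin (α * s) → ℕ))) (_ : IsBadicPartition b (α * s) Part),
    (∑ p ∈ Part, volume (interlaceB b α s '' badicBox b (α * s) p.1 p.2) *
      vitaliInner b α s αv f p.1 p.2) ^ (1 / 2 : ℝ)

/-- The marginal `f_u` of `f`, as a function of the coordinates in `u`
(listed in increasing order). -/
def marginal (s : ℕ) (u : Finset (Fin s)) (f : (Fin s → ℝ) → ℝ) (y : Fin u.card → ℝ) : ℝ :=
  ∫ x in unitBox s, f fun i => if h : i ∈ u then y ((u.orderIsoOfFin rfl).symm ⟨i, h⟩) else x i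

/-- The generalized Hardy–Krause variation `V_α(f)` of order `α`. -/
def hkVar (b α s : ℕ) (f : (Fin s → ℝ) → ℝ) : ENNReal :=
  (∑ u : Finset (Fin s),
    if u = ∅ then ENNReal.ofReal |∫ x in unitBox s, f x| ^ 2
    else ∑ αv ∈ Fintype.piFinset (fun _ : Fin u.card => Finset.Icc 1 α),
      vitaliVar b α u.card αv (marginal s u f) ^ 2) ^ (1 / 2 : ℝ)

/-- `K_i`: the indices of the `i`-th block where `ℓ` is positive. -/
def Kblock (d s : ℕ) (ℓ : Fin (d * s) → ℕ) (i : Fin s) : Finset (Fin (d * s)) :=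
  Finset.univ.filter fun j => 0 < ℓ j ∧ (j : ℕ) / d = (i : ℕ)

/-- `γ(ℓ) = ∏_i ∏_{j=1}^{α_i} γ_{i,j}`, the product over each block of the
`min(α,|K_i|)` smallest of the numbers `γ'_j = (b-1) b^{-j+(i-1)d-(l_j-1)d}`, `j ∈ K_i`. -/
def gammaEll (b d s α : ℕ) (ℓ : Fin (d * s) → ℕ) : ℝ :=
  ∏ i : Fin s,
    ((((Kblock d s ℓ i).image fun j : Fin (d * s) =>
        (b - 1 : ℝ) * (b : ℝ) ^ (-(((j : ℕ) % d : ℤ) + 1) - ((ℓ j : ℤ) - 1) * d)).sort (· ≤ ·)).take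
      (min α (Kblock d s ℓ i).card)).prod


/-! ### Auxiliary lemmas for Statement 4 -/

section Statement4Aux

variable {b d : ℕ}

lemma geom_nat (hb : 1 ≤ b) (M : ℕ) :
    ∑ j ∈ Finset.range M, (b - 1) * b ^ j = b ^ M - 1 := by
  induction M with
  | zero => simp
  | succ M ih =>
    rw [Finset.sum_range_succ, ih]
    have h1 : 1 ≤ b ^ M := Nat.one_le_pow _ _ (by omega)
    have h2 : (b - 1) * b ^ M = b * b ^ M - b ^ M := by rw [Nat.sub_mul, one_mul]
    have h3 : b ^ (M + 1) = b * b ^ M := by ring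
    have h4 : b ^ M ≤ b * b ^ M := Nat.le_mul_of_pos_left _ (by omega)
    omega

lemma sum_lt_pow (hb : 1 ≤ b) (c : ℕ → ℕ) (hc : ∀ j, c j < b) (m : ℕ) :
    ∑ j ∈ Finset.range m, c j * b ^ j < b ^ m := by
  have h1 : ∑ j ∈ Finset.range m, c j * b ^ j ≤ ∑ j ∈ Finset.range m, (b - 1) * b ^ j :=
    Finset.sum_le_sum fun j _ => Nat.mul_le_mul_right _ (by have := hc j; omega)
  have h2 : 1 ≤ b ^ m := Nat.one_le_pow _ _ (by omega)
  rw [geom_nat hb m] at h1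
  omega

/-- Digit extraction from a finite base-`b` expansion. -/
lemma digit_finsum (hb : 2 ≤ b) (M : ℕ) (c : ℕ → ℕ) (hc : ∀ j, c j < b) (m : ℕ) :
    (∑ j ∈ Finset.range M, c j * b ^ j) / b ^ m % b = if m < M then c m else 0 := by
  have hb1 : 1 ≤ b := by omega
  by_cases hm : m < M
  · simp only [hm, if_true]
    rw [Finset.range_eq_Ico, ← Finset.sum_Ico_consecutive _ (Nat.zero_le m) (le_of_lt hm)]
    have h1 : ∑ j ∈ Finset.Ico m M, c j * b ^ j
        = b ^ m * ∑ j ∈ Finset.Ico m M, c j * b ^ (j - m) := by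
      rw [Finset.mul_sum]
      refine Finset.sum_congr rfl fun j hj => ?_
      have hmj : m ≤ j := (Finset.mem_Ico.mp hj).1
      have hbj : b ^ j = b ^ m * b ^ (j - m) := by rw [← pow_add]; congr 1; omega
      rw [hbj]; ring
    have hA : ∑ j ∈ Finset.Ico 0 m, c j * b ^ j < b ^ m := by
      rw [← Finset.range_eq_Ico]; exact sum_lt_pow hb1 c hc m
    rw [h1, Nat.add_mul_div_left _ _ (Nat.pow_pos (by omega)),
      Nat.div_eq_of_lt hA, Nat.zero_add]
    rw [Finset.sum_eq_sum_Ico_succ_bot hm]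
    have h2 : ∑ j ∈ Finset.Ico (m + 1) M, c j * b ^ (j - m)
        = b * ∑ j ∈ Finset.Ico (m + 1) M, c j * b ^ (j - m - 1) := by
      rw [Finset.mul_sum]
      refine Finset.sum_congr rfl fun j hj => ?_
      have hmj : m + 1 ≤ j := (Finset.mem_Ico.mp hj).1
      have hbj : b ^ (j - m) = b * b ^ (j - m - 1) := by
        conv_lhs => rw [show j - m = (j - m - 1) + 1 by omega]
        rw [pow_succ]; ring
      rw [hbj]; ring
    rw [h2]
    simp [Nat.add_mul_mod_self_left, Nat.mod_eq_of_lt (hc m)]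
  · simp only [hm, if_false]
    have h1 : ∑ j ∈ Finset.range M, c j * b ^ j < b ^ m := by
      calc ∑ j ∈ Finset.range M, c j * b ^ j < b ^ M := sum_lt_pow hb1 c hc M
        _ ≤ b ^ m := Nat.pow_le_pow_right (by omega) (by omega)
    rw [Nat.div_eq_of_lt h1, Nat.zero_mod]

lemma summable_digits (hb : 2 ≤ b) (c : ℕ → ℕ) (hc : ∀ i, c i ≤ b) :
    Summable (fun i => (c i : ℝ) / (b : ℝ) ^ (i + 1)) := by
  have hb2 : (2 : ℝ) ≤ (b : ℝ) := by exact_mod_cast hb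
  have hbpos : (0 : ℝ) < b := by linarith
  have hgeo : Summable (fun i : ℕ => (1 / (b : ℝ)) ^ i) :=
    summable_geometric_of_lt_one (by positivity) (by rw [div_lt_one hbpos]; linarith)
  refine Summable.of_nonneg_of_le (fun i => by positivity) (fun i => ?_) hgeo
  have h1 : (c i : ℝ) ≤ b := by exact_mod_cast hc i
  rw [div_pow, one_pow, div_le_div_iff₀ (by positivity) (by positivity)]
  calc (c i : ℝ) * b ^ i ≤ (b : ℝ) * b ^ i := by gcongr
    _ = 1 * (b : ℝ) ^ (i + 1) := by ring

lemma tsum_maxdigits (hb : 2 ≤ b) : ∑' j : ℕ, ((b : ℝ) - 1) / (b : ℝ) ^ (j + 1) = 1 := by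
  have hb2 : (2 : ℝ) ≤ (b : ℝ) := by exact_mod_cast hb
  have hbpos : (0 : ℝ) < b := by linarith
  have h1 : ∀ j : ℕ, ((b : ℝ) - 1) / (b : ℝ) ^ (j + 1) = (((b : ℝ) - 1) / b) * (1 / b) ^ j := by
    intro j
    rw [div_pow, one_pow, div_mul_div_comm, mul_one, ← pow_succ']
  simp_rw [h1]
  rw [tsum_mul_left, tsum_geometric_of_lt_one (by positivity) (by rw [div_lt_one hbpos]; linarith)]
  have h3 : (1 : ℝ) - 1 / b = ((b : ℝ) - 1) / b := by field_simp
  rw [h3]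
  exact mul_inv_cancel₀ (ne_of_gt (div_pos (by linarith) hbpos))

/-- Digit extraction from an infinite base-`b` expansion whose digits are not
eventually all equal to `b - 1`. -/
lemma bdigit_tsum (hb : 2 ≤ b) (c : ℕ → ℕ) (hc : ∀ i, c i < b)
    (hne : ∀ N, ∃ i, N ≤ i ∧ c i ≠ b - 1) (m : ℕ) :
    bdigit b (∑' i, (c i : ℝ) / (b : ℝ) ^ (i + 1)) (m + 1) = c m := by
  have hb2 : (2 : ℝ) ≤ (b : ℝ) := by exact_mod_cast hb
  have hbpos : (0 : ℝ) < b := by linarith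
  have hsum : Summable (fun i => (c i : ℝ) / (b : ℝ) ^ (i + 1)) :=
    summable_digits hb c fun i => le_of_lt (hc i)
  set X : ℝ := ∑' i, (c i : ℝ) / (b : ℝ) ^ (i + 1) with hX
  set N : ℕ := ∑ i ∈ Finset.range (m + 1), c i * b ^ (m - i) with hN
  set T : ℝ := ∑' i : ℕ, (c (i + (m + 1)) : ℝ) / (b : ℝ) ^ (i + 1) with hT
  have hsumT : Summable (fun i : ℕ => (c (i + (m + 1)) : ℝ) / (b : ℝ) ^ (i + 1)) :=
    summable_digits hb _ fun i => le_of_lt (hc _)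
  have hsplit := Summable.sum_add_tsum_nat_add (f := fun i => (c i : ℝ) / (b : ℝ) ^ (i + 1)) (m + 1) hsum
  have hXT : X * (b : ℝ) ^ (m + 1) = (N : ℝ) + T := by
    rw [hX, ← hsplit, add_mul]
    congr 1
    · rw [Finset.sum_mul, hN]
      push_cast
      refine Finset.sum_congr rfl fun i hi => ?_
      have him : i < m + 1 := Finset.mem_range.mp hi
      have hpow : (b : ℝ) ^ (m + 1) = (b : ℝ) ^ (i + 1) * (b : ℝ) ^ (m - i) := by
        rw [← pow_add]; congr 1; omega
      rw [hpow]
      field_simp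
    · rw [← tsum_mul_right, hT]
      refine tsum_congr fun i => ?_
      show (c (i + (m + 1)) : ℝ) / (b : ℝ) ^ (i + (m + 1) + 1) * (b : ℝ) ^ (m + 1)
          = (c (i + (m + 1)) : ℝ) / (b : ℝ) ^ (i + 1)
      have hpow : (b : ℝ) ^ (i + (m + 1) + 1) = (b : ℝ) ^ (i + 1) * (b : ℝ) ^ (m + 1) := by
        rw [← pow_add]; congr 1; omega
      rw [hpow]
      field_simp
  have hT0 : 0 ≤ T := tsum_nonneg fun i => by positivity
  have hT1 : T < 1 := by
    obtain ⟨i0, hi0, hnei0⟩ := hne (m + 1)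
    have hi0' : c i0 < b - 1 := by have := hc i0; omega
    have hsumg : Summable (fun j : ℕ => ((b : ℝ) - 1) / (b : ℝ) ^ (j + 1)) := by
      have := summable_digits hb (fun _ => b - 1) (fun _ => by show b - 1 ≤ b; omega)
      have hcast : ((b - 1 : ℕ) : ℝ) = (b : ℝ) - 1 := by
        rw [Nat.cast_sub (by omega)]; norm_num
      simpa [hcast] using this
    calc T < ∑' j : ℕ, ((b : ℝ) - 1) / (b : ℝ) ^ (j + 1) := by
          refine Summable.tsum_lt_tsum (i := i0 - (m + 1)) (fun j => ?_) ?_ hsumT hsumg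
          · have hle : c (j + (m + 1)) ≤ b - 1 := by have := hc (j + (m + 1)); omega
            have h2 : (c (j + (m + 1)) : ℝ) ≤ ((b - 1 : ℕ) : ℝ) := Nat.cast_le.mpr hle
            have h1 : (c (j + (m + 1)) : ℝ) ≤ (b : ℝ) - 1 := by
              rw [Nat.cast_sub (by omega)] at h2; simpa using h2
            gcongr
          · have hidx : i0 - (m + 1) + (m + 1) = i0 := by omega
            rw [hidx, div_lt_div_iff₀ (by positivity) (by positivity)]
            have h1 : (c i0 : ℝ) < (b : ℝ) - 1 := by
              have h2 : (c i0 : ℝ) < ((b - 1 : ℕ) : ℝ) := by exact_mod_cast hi0'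
              rw [Nat.cast_sub (by omega)] at h2; simpa using h2
            have h3 : (0:ℝ) < (b : ℝ) ^ (i0 - (m + 1) + 1) := by positivity
            nlinarith
      _ = 1 := tsum_maxdigits hb
  have hfloor : ⌊X * (b : ℝ) ^ (m + 1)⌋ = (N : ℤ) := by
    rw [hXT]
    have hTf : ⌊T⌋ = 0 := Int.floor_eq_zero_iff.mpr ⟨hT0, hT1⟩
    have hcast : (N : ℝ) + T = ((N : ℤ) : ℝ) + T := by push_cast; ring
    rw [hcast, Int.floor_intCast_add, hTf, add_zero]
  have hNmod : N % b = c m := by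
    have h1 : N = c m + b * ∑ i ∈ Finset.range m, c i * b ^ (m - i - 1) := by
      rw [hN, Finset.sum_range_succ]
      have h2 : ∑ i ∈ Finset.range m, c i * b ^ (m - i)
          = b * ∑ i ∈ Finset.range m, c i * b ^ (m - i - 1) := by
        rw [Finset.mul_sum]
        refine Finset.sum_congr rfl fun i hi => ?_
        have him : i < m := Finset.mem_range.mp hi
        have hbj : b ^ (m - i) = b * b ^ (m - i - 1) := by
          conv_lhs => rw [show m - i = (m - i - 1) + 1 by omega]
          rw [pow_succ]; ring
        rw [hbj]; ring
      rw [h2, Nat.sub_self, pow_zero, mul_one]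
      ring
    rw [h1, Nat.add_mul_mod_self_left, Nat.mod_eq_of_lt (hc m)]
  show (⌊X * (b : ℝ) ^ (m + 1)⌋).toNat % b = c m
  rw [hfloor, Int.toNat_natCast, hNmod]

/-- The digit/fractional-part recursion for the floor-based expansion. -/
lemma bdigit_fract (hb : 2 ≤ b) (x : ℝ) (hx0 : 0 ≤ x) (i : ℕ) :
    (bdigit b x (i + 1) : ℤ) = ⌊Int.fract (x * (b : ℝ) ^ i) * b⌋ ∧
      Int.fract (x * (b : ℝ) ^ (i + 1))
        = Int.fract (x * (b : ℝ) ^ i) * b - ⌊Int.fract (x * (b : ℝ) ^ i) * b⌋ := by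
  have hb2 : (2 : ℝ) ≤ (b : ℝ) := by exact_mod_cast hb
  have hbpos : (0 : ℝ) < b := by linarith
  set u : ℝ := x * (b : ℝ) ^ i with hu
  set F : ℝ := Int.fract u with hF
  set D : ℤ := ⌊F * b⌋ with hD
  have hu0 : 0 ≤ u := by positivity
  have hfl0 : 0 ≤ ⌊u⌋ := Int.floor_nonneg.mpr hu0
  have hF0 : 0 ≤ F := Int.fract_nonneg u
  have hF1 : F < 1 := Int.fract_lt_one u
  have hD0 : 0 ≤ D := Int.floor_nonneg.mpr (by positivity)
  have hDb : D < b := by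
    have : F * b < 1 * b := by gcongr
    have h1 : F * b < b := by linarith
    exact_mod_cast Int.floor_lt.mpr (by push_cast; linarith)
  have hub : x * (b : ℝ) ^ (i + 1) = u * b := by rw [hu, pow_succ]; ring
  have huf : u * b = ((⌊u⌋ * b : ℤ) : ℝ) + F * b := by
    push_cast
    rw [hF, Int.fract]
    ring
  have hflr : ⌊x * (b : ℝ) ^ (i + 1)⌋ = ⌊u⌋ * b + D := by
    rw [hub, huf, Int.floor_intCast_add]
  constructor
  · have hn : ⌊u⌋ * b + D = ((⌊u⌋.toNat * b + D.toNat : ℕ) : ℤ) := by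
      push_cast
      rw [Int.toNat_of_nonneg hfl0, Int.toNat_of_nonneg hD0]
    have hdig : bdigit b x (i + 1) = (⌊u⌋.toNat * b + D.toNat) % b := by
      rw [bdigit, hflr, hn, Int.toNat_natCast]
    have hDtn : D.toNat < b := by omega
    rw [hdig]
    conv_lhs => rw [Nat.mul_comm]
    rw [Nat.mul_add_mod, Nat.mod_eq_of_lt hDtn, Int.toNat_of_nonneg hD0]
  · rw [Int.fract, hflr, hub, huf]
    push_cast
    rw [hF, Int.fract]
    ring

/-- The floor-based digits of `x ∈ [0,1)` are not eventually all equal to `b - 1`. -/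
lemma exists_digit_ne (hb : 2 ≤ b) (x : ℝ) (hx0 : 0 ≤ x) (hx1 : x < 1) (N : ℕ) :
    ∃ i, N ≤ i ∧ bdigit b x (i + 1) ≠ b - 1 := by
  by_contra hcon
  push_neg at hcon
  have hb2 : (2 : ℝ) ≤ (b : ℝ) := by exact_mod_cast hb
  have hbpos : (0 : ℝ) < b := by linarith
  have step : ∀ i, N ≤ i →
      Int.fract (x * (b : ℝ) ^ (i + 1))
        = Int.fract (x * (b : ℝ) ^ i) * b - ((b : ℝ) - 1) := by
    intro i hi
    obtain ⟨h1, h2⟩ := bdigit_fract hb x hx0 i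
    rw [hcon i hi] at h1
    have h3 : ((b - 1 : ℕ) : ℤ) = (b : ℤ) - 1 := by omega
    rw [h2, ← h1, h3]
    push_cast
    ring
  have main : ∀ m, ∀ i, N ≤ i → 1 - (1 / (b : ℝ)) ^ m ≤ Int.fract (x * (b : ℝ) ^ i) := by
    intro m
    induction m with
    | zero => intro i hi; simpa using Int.fract_nonneg (x * (b : ℝ) ^ i)
    | succ m ih =>
      intro i hi
      have h1 := ih (i + 1) (by omega)
      have h2 := step i hi
      have h3 : (1 / (b : ℝ)) ^ (m + 1) * b = (1 / (b : ℝ)) ^ m := by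
        rw [pow_succ]
        field_simp
      have h4 : (1 - (1 / (b : ℝ)) ^ (m + 1)) * (b : ℝ) = (b : ℝ) - (1 / (b : ℝ)) ^ m := by
        rw [sub_mul, one_mul, h3]
      refine le_of_mul_le_mul_right ?_ hbpos
      rw [h4]
      linarith
  have hfr1 : Int.fract (x * (b : ℝ) ^ N) < 1 := Int.fract_lt_one _
  obtain ⟨m, hm⟩ := exists_pow_lt_of_lt_one (x := 1 - Int.fract (x * (b : ℝ) ^ N))
    (by linarith) (show 1 / (b : ℝ) < 1 by rw [div_lt_one hbpos]; linarith)
  have := main m N le_rfl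
  linarith

/-- Reindexing a sum over `range (d * s)` as a double sum over blocks. -/
lemma sum_range_mul {M : Type*} [AddCommMonoid M] (d s : ℕ) (f : ℕ → M) :
    ∑ j ∈ Finset.range (d * s), f j = ∑ r : Fin d, ∑ a ∈ Finset.range s, f (r + a * d) := by
  induction s with
  | zero => simp
  | succ s ih =>
    have h1 : d * (s + 1) = d * s + d := by ring
    rw [h1, Finset.range_eq_Ico,
      ← Finset.sum_Ico_consecutive _ (Nat.zero_le (d * s)) (Nat.le_add_right (d * s) d),
      ← Finset.range_eq_Ico, ih, Finset.sum_Ico_eq_sum_range]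
    have h2 : d * s + d - d * s = d := by omega
    rw [h2]
    have h3 : ∑ k ∈ Finset.range d, f (d * s + k) = ∑ r : Fin d, f ((r : ℕ) + s * d) := by
      rw [← Fin.sum_univ_eq_sum_range (fun k => f (d * s + k))]
      exact Finset.sum_congr rfl fun r _ => by congr 1; ring
    rw [h3, ← Finset.sum_add_distrib]
    exact Finset.sum_congr rfl fun r _ => by rw [Finset.sum_range_succ]

lemma dig_eq_zero (hb : 2 ≤ b) {n a : ℕ} (h : n ≤ a) : n / b ^ a % b = 0 := by
  have h1 : n < b ^ a :=
    lt_of_le_of_lt h (Nat.lt_pow_self (by omega))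
  rw [Nat.div_eq_of_lt h1, Nat.zero_mod]

lemma interlaceN_digit (hb : 2 ≤ b) (hd : 1 ≤ d) (k : Fin d → ℕ) (j : ℕ) :
    interlaceN b d k / b ^ j % b
      = k ⟨j % d, Nat.mod_lt j (by omega)⟩ / b ^ (j / d) % b := by
  set K0 : ℕ := 1 + ∑ r, k r with hK0
  have hkr : ∀ r : Fin d, k r ≤ K0 := by
    intro r
    calc k r ≤ ∑ r', k r' :=
          Finset.single_le_sum (fun r _ => Nat.zero_le _) (Finset.mem_univ r)
      _ ≤ K0 := by omega
  have hre : interlaceN b d k = ∑ j ∈ Finset.range (d * K0),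
      (k ⟨j % d, Nat.mod_lt j (by omega)⟩ / b ^ (j / d) % b) * b ^ j := by
    rw [sum_range_mul]
    rw [interlaceN]
    refine Finset.sum_congr rfl fun r _ => ?_
    have hmod : ∀ a : ℕ, ((r : ℕ) + a * d) % d = (r : ℕ) := by
      intro a
      rw [Nat.add_mul_mod_self_right, Nat.mod_eq_of_lt r.2]
    have hdiv : ∀ a : ℕ, ((r : ℕ) + a * d) / d = a := by
      intro a
      rw [Nat.add_mul_div_right _ _ (by omega : 0 < d), Nat.div_eq_of_lt r.2, Nat.zero_add]
    have hterm : ∀ a ∈ Finset.range K0,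
        (k ⟨((r : ℕ) + a * d) % d, Nat.mod_lt _ (by omega)⟩ / b ^ (((r : ℕ) + a * d) / d) % b)
            * b ^ ((r : ℕ) + a * d)
          = (k r / b ^ a % b) * b ^ ((r : ℕ) + a * d) := by
      intro a _
      simp only [hmod, hdiv, Fin.eta]
    rw [Finset.sum_congr rfl hterm]
    refine Finset.sum_subset (Finset.range_subset_range.mpr (hkr r)) fun a _ ha => ?_
    have hka : k r ≤ a := by
      by_contra hlt
      exact ha (Finset.mem_range.mpr (by omega))
    rw [dig_eq_zero hb hka, Nat.zero_mul]
  rw [hre, digit_finsum hb _ _ (fun j => Nat.mod_lt _ (by omega)) j]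
  split
  · rfl
  · rename_i h
    symm
    apply dig_eq_zero hb
    have h1 : K0 * d ≤ j := by rw [Nat.mul_comm]; omega
    have h2 : K0 ≤ j / d := (Nat.le_div_iff_mul_le (by omega : 0 < d)).mpr h1
    exact le_trans (hkr _) h2

set_option maxHeartbeats 1000000 in
lemma interlaceR_digit (hb : 2 ≤ b) (hd : 1 ≤ d) (x : Fin d → ℝ)
    (hx : ∀ r, x r ∈ Set.Ico (0 : ℝ) 1) (j : ℕ) :
    bdigit b (interlaceR b d x) (j + 1)
      = bdigit b (x ⟨j % d, Nat.mod_lt j (by omega)⟩) (j / d + 1) := by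
  haveI : NeZero d := ⟨by omega⟩
  set c : ℕ → ℕ := fun i => bdigit b (x ⟨i % d, Nat.mod_lt i (by omega)⟩) (i / d + 1) with hc
  have hclt : ∀ i, c i < b := fun i => Nat.mod_lt _ (by omega)
  have hre : interlaceR b d x = ∑' i : ℕ, (c i : ℝ) / (b : ℝ) ^ (i + 1) := by
    have hsum : Summable (fun i : ℕ => (c i : ℝ) / (b : ℝ) ^ (i + 1)) :=
      summable_digits hb c fun i => le_of_lt (hclt i)
    have heq : ∀ p : ℕ × Fin d,
        (fun i : ℕ => (c i : ℝ) / (b : ℝ) ^ (i + 1)) ((Nat.divModEquiv d).symm p)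
          = (bdigit b (x p.2) (p.1 + 1) : ℝ) / (b : ℝ) ^ ((p.2 : ℕ) + 1 + p.1 * d) := by
      rintro ⟨a, r⟩
      have hval : (Nat.divModEquiv d).symm (a, r) = a * d + (r : ℕ) := rfl
      rw [hval]
      have hmod : (a * d + (r : ℕ)) % d = (r : ℕ) := by
        conv_lhs => rw [Nat.mul_comm a d]
        rw [Nat.mul_add_mod, Nat.mod_eq_of_lt r.2]
      have hdiv : (a * d + (r : ℕ)) / d = a := by
        rw [Nat.add_comm, Nat.add_mul_div_right _ _ (by omega : 0 < d),
          Nat.div_eq_of_lt r.2, Nat.zero_add]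
      have hexp : a * d + (r : ℕ) + 1 = (r : ℕ) + 1 + a * d := by omega
      simp only [hc, hmod, hdiv, hexp]
    have hsum2 : Summable (fun p : ℕ × Fin d =>
        (fun i : ℕ => (c i : ℝ) / (b : ℝ) ^ (i + 1)) ((Nat.divModEquiv d).symm p)) :=
      (Equiv.summable_iff _).mpr hsum
    rw [interlaceR]
    rw [← Equiv.tsum_eq (Nat.divModEquiv d).symm (fun i => (c i : ℝ) / (b : ℝ) ^ (i + 1))]
    rw [Summable.tsum_prod' hsum2 fun a => Summable.of_finite]
    refine tsum_congr fun a => ?_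
    rw [tsum_fintype]
    exact (Finset.sum_congr rfl fun r _ => heq (a, r)).symm
  have hne : ∀ N, ∃ i, N ≤ i ∧ c i ≠ b - 1 := by
    intro N
    obtain ⟨a, ha, hane⟩ := exists_digit_ne hb (x ⟨0, by omega⟩) (hx _).1 (hx _).2 N
    refine ⟨a * d, by nlinarith, ?_⟩
    have hmod : (a * d) % d = 0 := Nat.mul_mod_left a d
    have hdiv : (a * d) / d = a := Nat.mul_div_cancel a (by omega)
    simp only [hc, hmod, hdiv]
    convert hane using 3
  rw [hre, bdigit_tsum hb c hclt hne j]

end Statement4Aux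

/-- Walsh functions and the digit interlacing function. -/
theorem statement4 (b d : ℕ) (hb : 2 ≤ b) (hd : 1 ≤ d) (k : Fin d → ℕ) (x : Fin d → ℝ)
    (hx : ∀ r, x r ∈ Set.Ico (0 : ℝ) 1) :
    wal b (interlaceN b d k) (interlaceR b d x) = ∏ r, wal b (k r) (x r) := by
  have hb0 : 0 < b := by omega
  simp only [wal]
  rw [Finset.prod_pow_eq_pow_sum]
  congr 1
  set K : ℕ := interlaceN b d k with hK
  set K0 : ℕ := 1 + ∑ r, k r with hK0
  have hkr : ∀ r : Fin d, k r ≤ K0 := by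
    intro r
    calc k r ≤ ∑ r', k r' :=
          Finset.single_le_sum (fun r _ => Nat.zero_le _) (Finset.mem_univ r)
      _ ≤ K0 := by omega
  set t : ℕ → ℕ := fun j =>
    bdigit b (x ⟨j % d, Nat.mod_lt j (by omega)⟩) (j / d + 1)
      * (k ⟨j % d, Nat.mod_lt j (by omega)⟩ / b ^ (j / d) % b) with ht
  have hLHS : ∑ j ∈ Finset.range K, bdigit b (interlaceR b d x) (j + 1) * (K / b ^ j % b)
      = ∑ j ∈ Finset.range K, t j := by
    refine Finset.sum_congr rfl fun j _ => ?_
    rw [interlaceR_digit hb hd x hx j, hK, interlaceN_digit hb hd k j]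
  rw [hLHS]
  have hdig0 : ∀ j, j / d ≥ k ⟨j % d, Nat.mod_lt j (by omega)⟩ →
      t j = 0 := by
    intro j hj
    rw [ht]
    simp only
    rw [dig_eq_zero hb hj, Nat.mul_zero]
  have ht0 : ∀ j, t j ≠ 0 → j < K := by
    intro j hne
    set r : Fin d := ⟨j % d, Nat.mod_lt j (by omega)⟩ with hr
    set a : ℕ := j / d with ha
    have hak : a < k r := by
      by_contra hle
      push_neg at hle
      exact hne (hdig0 j hle)
    have hdigne : k r / b ^ a % b ≠ 0 := by
      intro h0
      apply hne
      rw [ht]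
      simp only
      rw [← hr, ← ha, h0, Nat.mul_zero]
    have h1 : (k r / b ^ a % b) * b ^ ((r : ℕ) + a * d)
        ≤ ∑ a' ∈ Finset.range (k r), (k r / b ^ a' % b) * b ^ ((r : ℕ) + a' * d) :=
      Finset.single_le_sum (f := fun a' => (k r / b ^ a' % b) * b ^ ((r : ℕ) + a' * d))
        (fun _ _ => Nat.zero_le _) (Finset.mem_range.mpr hak)
    have h2 : (∑ a' ∈ Finset.range (k r), (k r / b ^ a' % b) * b ^ ((r : ℕ) + a' * d)) ≤ K := by
      rw [hK, interlaceN]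
      exact Finset.single_le_sum
        (f := fun r' : Fin d => ∑ a' ∈ Finset.range (k r'), (k r' / b ^ a' % b) * b ^ ((r' : ℕ) + a' * d))
        (fun _ _ => Nat.zero_le _) (Finset.mem_univ r)
    have hj : (r : ℕ) + a * d = j := Nat.mod_add_div' j d
    have h3 : b ^ j ≤ (k r / b ^ a % b) * b ^ ((r : ℕ) + a * d) := by
      rw [hj]
      have h4 : 1 ≤ k r / b ^ a % b := Nat.one_le_iff_ne_zero.mpr hdigne
      calc b ^ j = 1 * b ^ j := (Nat.one_mul _).symm
        _ ≤ (k r / b ^ a % b) * b ^ j := Nat.mul_le_mul_right _ h4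
    have h4 : j < b ^ j := lt_of_lt_of_le (Nat.lt_two_pow_self) (Nat.pow_le_pow_left hb j)
    omega
  have hz1 : ∀ j, d * K0 ≤ j → t j = 0 := by
    intro j hj
    apply hdig0
    have h1 : K0 * d ≤ j := by rw [Nat.mul_comm]; omega
    have h2 : K0 ≤ j / d := (Nat.le_div_iff_mul_le (by omega : 0 < d)).mpr h1
    exact le_trans (hkr _) h2
  have hz2 : ∀ j, K ≤ j → t j = 0 := by
    intro j hj
    by_contra hne
    have := ht0 j hne
    omega
  set L : ℕ := max K (d * K0) with hL
  have e1 : ∑ j ∈ Finset.range K, t j = ∑ j ∈ Finset.range L, t j :=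
    Finset.sum_subset (Finset.range_subset_range.mpr (le_max_left _ _))
      fun j _ hj => hz2 j (by simp only [Finset.mem_range] at hj; omega)
  have e2 : ∑ j ∈ Finset.range (d * K0), t j = ∑ j ∈ Finset.range L, t j :=
    Finset.sum_subset (Finset.range_subset_range.mpr (le_max_right _ _))
      fun j _ hj => hz1 j (by simp only [Finset.mem_range] at hj; omega)
  rw [e1, ← e2, sum_range_mul]
  refine Finset.sum_congr rfl fun r _ => ?_
  have hmod : ∀ a : ℕ, ((r : ℕ) + a * d) % d = (r : ℕ) := by
    intro a
    rw [Nat.add_mul_mod_self_right, Nat.mod_eq_of_lt r.2]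
  have hdiv : ∀ a : ℕ, ((r : ℕ) + a * d) / d = a := by
    intro a
    rw [Nat.add_mul_div_right _ _ (by omega : 0 < d), Nat.div_eq_of_lt r.2, Nat.zero_add]
  have hterm : ∀ a ∈ Finset.range K0,
      t ((r : ℕ) + a * d) = bdigit b (x r) (a + 1) * (k r / b ^ a % b) := by
    intro a _
    rw [ht]
    simp only [hmod, hdiv, Fin.eta]
  rw [Finset.sum_congr rfl hterm]
  refine (Finset.sum_subset (Finset.range_subset_range.mpr (hkr r)) fun a _ ha => ?_).symm
  have hka : k r ≤ a := by
    by_contra hlt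
    exact ha (Finset.mem_range.mpr (by omega))
  rw [dig_eq_zero hb hka, Nat.mul_zero]

end Paper
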